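/- Let (X, 𝓘) be a matroid, let f : 𝓘 → ℝ be a polymatroid function on 𝓘 with f({j}) > 0 for some j with {j} ∈ 𝓘, and let b(f) be the partial curvature of f. Let g : 2^X → ℝ be a polymatroid set function that agrees with f on 𝓘. Then c(g) = b(f) if and only if g(X) − g(X∖{a}) ≥ (1 − b(f)) · g({a}) for every a ∈ X, with equality for some a ∈ X. -/
import Mathlib


open Finset

variable {α : Type*} [DecidableEq α] [Fintype α]

/-- Monotone set function. -/
def SetMonotone (f : Finset α → ℝ) : Prop :=
  ∀ ⦃A B : Finset α⦄, A ⊆ B → f A ≤ f B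

/-- Submodular set function. -/
def SetSubmodular (f : Finset α → ℝ) : Prop :=
  ∀ ⦃A B : Finset α⦄, A ⊆ B → ∀ j ∉ B, f (insert j A) - f A ≥ f (insert j B) - f B

/-- Polymatroid set function: monotone, submodular, and `f ∅ = 0`. -/
def PolymatroidFn (f : Finset α → ℝ) : Prop :=
  SetMonotone f ∧ SetSubmodular f ∧ f ∅ = 0

/-- Hereditary collection of sets. -/
def Hereditary (I : Finset α → Prop) : Prop :=
  ∀ ⦃B⦄, I B → ∀ ⦃A⦄, A ⊆ B → I A

/-- Independence system: nonempty hereditary collection. -/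
def IndepSystem (I : Finset α → Prop) : Prop :=
  (∃ S, I S) ∧ Hereditary I

/-- Augmentation property. -/
def Augmentation (I : Finset α → Prop) : Prop :=
  ∀ ⦃A B⦄, I A → I B → A.card < B.card → ∃ j ∈ B, j ∉ A ∧ I (insert j A)

/-- Matroid: independence system with augmentation. -/
def IsMatroid (I : Finset α → Prop) : Prop :=
  IndepSystem I ∧ Augmentation I

/-- One step of the greedy algorithm: add a feasible element of largest gain. -/
def GreedyStep (I : Finset α → Prop) (f : Finset α → ℝ) (S S' : Finset α) : Prop :=
  ∃ a ∉ S, I (insert a S) ∧ S' = insert a S ∧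
    ∀ b ∉ S, I (insert b S) → f (insert b S) ≤ f (insert a S)

/-- Greedy solution: obtained from `∅` by greedy steps, and no further feasible addition. -/
def IsGreedy (I : Finset α → Prop) (f : Finset α → ℝ) (G : Finset α) : Prop :=
  Relation.ReflTransGen (GreedyStep I f) ∅ G ∧ ∀ a ∉ G, ¬ I (insert a G)

/-- Optimal solution: member of the constraint maximizing `f`. -/
def IsOptimal (I : Finset α → Prop) (f : Finset α → ℝ) (O : Finset α) : Prop :=
  I O ∧ ∀ S, I S → f S ≤ f O

/-- `B` is a basis of `S`: a maximal independent subset of `S`. -/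
def IsBasisOf (I : Finset α → Prop) (S B : Finset α) : Prop :=
  B ⊆ S ∧ I B ∧ ∀ ⦃B' : Finset α⦄, I B' → B ⊆ B' → B' ⊆ S → B' = B

/-- Lower rank of `S`: minimum cardinality of a basis of `S`. -/
noncomputable def lr (I : Finset α → Prop) (S : Finset α) : ℕ :=
  sInf {n : ℕ | ∃ B, IsBasisOf I S B ∧ B.card = n}

/-- Upper rank of `S`: maximum cardinality of a basis of `S`. -/
noncomputable def ur (I : Finset α → Prop) (S : Finset α) : ℕ :=
  sSup {n : ℕ | ∃ B, IsBasisOf I S B ∧ B.card = n}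

/-- Rank quotient `q(X, 𝓘)`. -/
noncomputable def rankQuotient (I : Finset α → Prop) : ℝ :=
  sInf {x : ℝ | ∃ S : Finset α, 0 < ur I S ∧ x = (lr I S : ℝ) / (ur I S : ℝ)}

/-- Total curvature `c(f)`. -/
noncomputable def totalCurvature (f : Finset α → ℝ) : ℝ :=
  sSup {x : ℝ | ∃ j : α, f {j} ≠ f ∅ ∧
    x = 1 - (f Finset.univ - f (Finset.univ.erase j)) / (f {j} - f ∅)}

/-- Partial curvature `b(f)`, over pairs `(j, A)` with `j ∈ A ∈ 𝓘`. -/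
noncomputable def partialCurvature (I : Finset α → Prop) (f : Finset α → ℝ) : ℝ :=
  sSup {x : ℝ | ∃ (j : α) (A : Finset α), I A ∧ j ∈ A ∧ f {j} ≠ f ∅ ∧
    x = 1 - (f A - f (A.erase j)) / (f {j} - f ∅)}

/-- Total `k`-batch curvature `c_k`. -/
noncomputable def batchCurvature (f : Finset α → ℝ) (k : ℕ) : ℝ :=
  sSup {x : ℝ | ∃ J : Finset α, J.card = k ∧ f J ≠ f ∅ ∧
    x = 1 - (f Finset.univ - f (Finset.univ \ J)) / (f J - f ∅)}

/-- Polymatroid function defined on a collection `𝓘`. -/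
def PolymatroidOn (I : Finset α → Prop) (f : Finset α → ℝ) : Prop :=
  f ∅ = 0 ∧ (∀ ⦃A B : Finset α⦄, A ⊆ B → I B → f A ≤ f B) ∧
    ∀ ⦃A B : Finset α⦄, A ⊆ B → ∀ j ∉ B, I (insert j B) →
      f (insert j A) - f A ≥ f (insert j B) - f B

/-- One step of the batched greedy algorithm: add a feasible batch of size `k`
of largest gain. -/
def BatchStep (I : Finset α → Prop) (f : Finset α → ℝ) (k : ℕ) (S S' : Finset α) : Prop :=
  ∃ J : Finset α, Disjoint J S ∧ J.card = k ∧ I (S ∪ J) ∧ S' = S ∪ J ∧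
    ∀ J' : Finset α, Disjoint J' S → J'.card = k → I (S ∪ J') → f (S ∪ J') ≤ f (S ∪ J)

/-- `k`-batch greedy solution: `l - 1` batches of size `k` followed by one batch of
size `m`. -/
def IsBatchGreedy (I : Finset α → Prop) (f : Finset α → ℝ) (k l m : ℕ)
    (S : Finset α) : Prop :=
  ∃ T : ℕ → Finset α, T 0 = ∅ ∧ (∀ t < l - 1, BatchStep I f k (T t) (T (t + 1))) ∧
    BatchStep I f m (T (l - 1)) S

/-- Characterization of extensions `g` of `f` whose total curvature equals the
partial curvature `b(f)`. -/
theorem totalCurvature_eq_partialCurvature_iff {α : Type*} [DecidableEq α] [Fintype α]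
    (I : Finset α → Prop) (hI : IsMatroid I)
    (f : Finset α → ℝ) (hf : PolymatroidOn I f)
    (hpos : ∃ j : α, I {j} ∧ 0 < f {j})
    (g : Finset α → ℝ) (hg : PolymatroidFn g)
    (hagree : ∀ S, I S → g S = f S) :
    totalCurvature g = partialCurvature I f ↔
      ((∀ a : α, g Finset.univ - g (Finset.univ.erase a) ≥
          (1 - partialCurvature I f) * g {a}) ∧
        ∃ a : α, g Finset.univ - g (Finset.univ.erase a) =
          (1 - partialCurvature I f) * g {a}) := by
  obtain ⟨hg_mono, hg_sub, hg_empty⟩ := hg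
  obtain ⟨hf_empty, hf_mono, hf_sub⟩ := hf
  obtain ⟨-, hher⟩ := hI.1
  obtain ⟨j1, hj1I, hj1pos⟩ := hpos
  set b := partialCurvature I f with hb
  -- finiteness of the two sets
  have hTfin : {x : ℝ | ∃ j : α, g {j} ≠ g ∅ ∧
      x = 1 - (g Finset.univ - g (Finset.univ.erase j)) / (g {j} - g ∅)}.Finite := by
    apply Set.Finite.subset (Set.finite_range
      (fun j : α => 1 - (g Finset.univ - g (Finset.univ.erase j)) / (g {j} - g ∅)))
    rintro x ⟨j, -, rfl⟩
    exact ⟨j, rfl⟩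
  have hPfin : {x : ℝ | ∃ (j : α) (A : Finset α), I A ∧ j ∈ A ∧ f {j} ≠ f ∅ ∧
      x = 1 - (f A - f (A.erase j)) / (f {j} - f ∅)}.Finite := by
    apply Set.Finite.subset (Set.finite_range
      (fun p : α × Finset α => 1 - (f p.2 - f (p.2.erase p.1)) / (f {p.1} - f ∅)))
    rintro x ⟨j, A, -, -, -, rfl⟩
    exact ⟨(j, A), rfl⟩
  have hgj1 : g {j1} = f {j1} := hagree _ hj1I
  have hgj1ne : g {j1} ≠ g ∅ := by
    rw [hgj1, hg_empty]; exact ne_of_gt hj1pos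
  have hTne : {x : ℝ | ∃ j : α, g {j} ≠ g ∅ ∧
      x = 1 - (g Finset.univ - g (Finset.univ.erase j)) / (g {j} - g ∅)}.Nonempty :=
    ⟨_, j1, hgj1ne, rfl⟩
  have hPne : {x : ℝ | ∃ (j : α) (A : Finset α), I A ∧ j ∈ A ∧ f {j} ≠ f ∅ ∧
      x = 1 - (f A - f (A.erase j)) / (f {j} - f ∅)}.Nonempty :=
    ⟨_, j1, {j1}, hj1I, Finset.mem_singleton_self j1,
      (by rw [hf_empty]; exact ne_of_gt hj1pos), rfl⟩
  -- positivity facts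
  have hgpos : ∀ j : α, g {j} ≠ g ∅ → 0 < g {j} := by
    intro j hne
    refine lt_of_le_of_ne ?_ ?_
    · rw [← hg_empty]; exact hg_mono (Finset.empty_subset _)
    · rw [hg_empty] at hne; exact fun h => hne h.symm
  have hDnn : ∀ a : α, 0 ≤ g Finset.univ - g (Finset.univ.erase a) := by
    intro a
    exact sub_nonneg.mpr (hg_mono (Finset.erase_subset _ _))
  -- b ≤ totalCurvature g
  have hble : b ≤ totalCurvature g := by
    rw [hb, partialCurvature]
    apply csSup_le hPne
    rintro x ⟨j, A, hA, hjA, hfj, rfl⟩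
    have hjI : I {j} := hher hA (Finset.singleton_subset_iff.mpr hjA)
    have heI : I (A.erase j) := hher hA (Finset.erase_subset _ _)
    have hgj : g {j} = f {j} := hagree _ hjI
    have hgA : g A = f A := hagree _ hA
    have hgAe : g (A.erase j) = f (A.erase j) := hagree _ heI
    have hfjpos : 0 < f {j} := by
      refine lt_of_le_of_ne ?_ ?_
      · rw [← hf_empty]; exact hf_mono (Finset.empty_subset _) hjI
      · rw [hf_empty] at hfj; exact fun h => hfj h.symm
    have hgjne : g {j} ≠ g ∅ := by
      rw [hgj, hg_empty]; exact ne_of_gt hfjpos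
    have hsubm : g Finset.univ - g (Finset.univ.erase j) ≤ g A - g (A.erase j) := by
      have h1 : A.erase j ⊆ Finset.univ.erase j :=
        Finset.erase_subset_erase _ (Finset.subset_univ A)
      have h2 := hg_sub h1 j (Finset.notMem_erase j _)
      rwa [Finset.insert_erase hjA, Finset.insert_erase (Finset.mem_univ j)] at h2
    have hterm : 1 - (f A - f (A.erase j)) / (f {j} - f ∅) ≤
        1 - (g Finset.univ - g (Finset.univ.erase j)) / (g {j} - g ∅) := by
      rw [hf_empty, hg_empty, sub_zero, sub_zero, ← hgj, ← hgA, ← hgAe]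
      have : (g Finset.univ - g (Finset.univ.erase j)) / g {j} ≤
          (g A - g (A.erase j)) / g {j} := by
        apply div_le_div_of_nonneg_right hsubm
        rw [hgj]; exact le_of_lt hfjpos
      linarith
    refine le_trans hterm (le_csSup hTfin.bddAbove ⟨j, hgjne, rfl⟩)
  constructor
  · intro hc
    have hcmem := hTne.csSup_mem hTfin
    obtain ⟨j0, hj0ne, hj0eq⟩ := hcmem
    have hj0pos : 0 < g {j0} := hgpos _ hj0ne
    constructor
    · intro a
      by_cases hane : g {a} ≠ g ∅
      · have hapos : 0 < g {a} := hgpos _ hane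
        have hmem : (1 - (g Finset.univ - g (Finset.univ.erase a)) / (g {a} - g ∅)) ∈
            {x : ℝ | ∃ j : α, g {j} ≠ g ∅ ∧
              x = 1 - (g Finset.univ - g (Finset.univ.erase j)) / (g {j} - g ∅)} :=
          ⟨a, hane, rfl⟩
        have hle := le_csSup hTfin.bddAbove hmem
        rw [← totalCurvature, hc] at hle
        rw [hg_empty, sub_zero] at hle
        have h2 : (1 - b) ≤ (g Finset.univ - g (Finset.univ.erase a)) / g {a} := by
          linarith
        calc (1 - b) * g {a} ≤
            ((g Finset.univ - g (Finset.univ.erase a)) / g {a}) * g {a} := by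
              exact mul_le_mul_of_nonneg_right h2 (le_of_lt hapos)
          _ = g Finset.univ - g (Finset.univ.erase a) := by
              field_simp
      · push_neg at hane
        rw [hane, hg_empty, mul_zero]
        exact hDnn a
    · refine ⟨j0, ?_⟩
      have hc' : sSup {x : ℝ | ∃ j : α, g {j} ≠ g ∅ ∧
          x = 1 - (g Finset.univ - g (Finset.univ.erase j)) / (g {j} - g ∅)} = b := hc
      rw [hc', hg_empty, sub_zero] at hj0eq
      have h3 : (g Finset.univ - g (Finset.univ.erase j0)) / g {j0} = 1 - b := by
        linarith
      have h4 := (div_eq_iff (ne_of_gt hj0pos)).mp h3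
      linarith
  · rintro ⟨hall, -⟩
    refine le_antisymm ?_ hble
    rw [totalCurvature]
    apply csSup_le hTne
    rintro x ⟨j, hjne, rfl⟩
    have hjpos : 0 < g {j} := hgpos _ hjne
    have := hall j
    rw [hg_empty, sub_zero]
    have h2 : (1 - b) ≤ (g Finset.univ - g (Finset.univ.erase j)) / g {j} :=
      (le_div_iff₀ hjpos).mpr this
    linarith
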